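/- Let H be a real Hilbert space, let f_1,…,f_k : H → ℝ be locally Lipschitz near every point of H, let x ∈ H and ε ≥ 0. Let v̄ ∈ H be such that −v̄ ∈ F_ε(x) and ‖v̄‖ ≤ ‖w‖ for all w ∈ F_ε(x) (i.e., v̄ is, up to sign, the element of minimal norm in −F_ε(x)). Then for every t ≥ 0 with t·‖v̄‖ ≤ ε and every i ∈ {1,…,k}: f_i(x + t·v̄) ≤ f_i(x) − t·‖v̄‖². -/

import Mathlib

open Filter Topology RealInnerProductSpace

/-- Clarke generalized directional derivative
`f°(x;v) = limsup_{y→x, t↓0} (f(y+tv) − f(y))/t`. -/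
noncomputable def clarkeDir {H : Type*} [NormedAddCommGroup H] [InnerProductSpace ℝ H]
    (f : H → ℝ) (x v : H) : ℝ :=
  limsup (fun p : H × ℝ => (f (p.1 + p.2 • v) - f p.1) / p.2)
    ((𝓝 x) ×ˢ (𝓝[>] (0 : ℝ)))

/-- Clarke subdifferential, with the dual of `H` identified with `H` via the Riesz map:
`∂f(x) = {w : ⟪w, v⟫ ≤ f°(x;v) for all v}`. -/
def clarkeSubdiff {H : Type*} [NormedAddCommGroup H] [InnerProductSpace ℝ H]
    (f : H → ℝ) (x : H) : Set H :=
  {w : H | ∀ v : H, ⟪w, v⟫ ≤ clarkeDir f x v}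

/-- Goldstein ε-subdifferential
`∂_ε f(x) = closure (convexHull (⋃_{y ∈ closedBall x ε} ∂f(y)))`. -/
def goldsteinSubdiff {H : Type*} [NormedAddCommGroup H] [InnerProductSpace ℝ H]
    (f : H → ℝ) (ε : ℝ) (x : H) : Set H :=
  closure (convexHull ℝ (⋃ y ∈ Metric.closedBall x ε, clarkeSubdiff f y))

/-- `f` is locally Lipschitz near `x`: Lipschitz on some open ball around `x`. -/
def LocallyLipschitzNear {H : Type*} [NormedAddCommGroup H]
    (f : H → ℝ) (x : H) : Prop :=
  ∃ ε > 0, ∃ L : NNReal, LipschitzOnWith L f (Metric.ball x ε)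

/-- Multiobjective ε-subdifferential `F_ε(x) = closure (convexHull (⋃ i, ∂_ε f_i(x)))`. -/
def multiSubdiff {H : Type*} [NormedAddCommGroup H] [InnerProductSpace ℝ H]
    {k : ℕ} (f : Fin k → H → ℝ) (ε : ℝ) (x : H) : Set H :=
  closure (convexHull ℝ (⋃ i : Fin k, goldsteinSubdiff (f i) ε x))

/-- The weak topology on `H`: the topology induced by the functionals `⟪·, v⟫`, `v : H`. -/
noncomputable def weakTopology (H : Type*) [NormedAddCommGroup H] [InnerProductSpace ℝ H] :
    TopologicalSpace H :=
  ⨅ v : H, TopologicalSpace.induced (fun x : H => ⟪x, v⟫) inferInstance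

open Metric Set

section clarkeHelpers

section helpers

variable {H : Type*} [NormedAddCommGroup H] [InnerProductSpace ℝ H]

lemma clarke_unif_bound {f : H → ℝ} {y : H} (hf : LocallyLipschitzNear f y) :
    ∃ C : ℝ, 0 ≤ C ∧ ∀ v : H, ∀ᶠ p : H × ℝ in (𝓝 y) ×ˢ (𝓝[>] (0 : ℝ)),
      |(f (p.1 + p.2 • v) - f p.1) / p.2| ≤ C * ‖v‖ := by
  obtain ⟨δ, hδ, L, hL⟩ := hf
  refine ⟨L, L.coe_nonneg, fun v => ?_⟩
  have hv1 : (0:ℝ) < ‖v‖ + 1 := by positivity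
  have h1 : ∀ᶠ q : H in 𝓝 y, q ∈ ball y (δ/2) :=
    isOpen_ball.eventually_mem (mem_ball_self (by positivity))
  have h2 : ∀ᶠ s : ℝ in 𝓝[>] (0:ℝ), s ∈ Ioo 0 (δ/(2*(‖v‖+1))) :=
    eventually_of_mem (Ioo_mem_nhdsGT_of_mem ⟨le_refl 0, by positivity⟩) fun x hx => hx
  filter_upwards [h1.prod_mk h2] with p hp
  obtain ⟨hp1, hp2, hp3⟩ := hp
  have hsv : ‖p.2 • v‖ < δ/2 := by
    rw [norm_smul, Real.norm_eq_abs, abs_of_pos hp2]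
    have h5 : δ / (2*(‖v‖+1)) * (‖v‖+1) = δ / 2 := by field_simp
    have h4 : p.2 * (‖v‖ + 1) < δ / 2 := by
      calc p.2 * (‖v‖+1) < δ/(2*(‖v‖+1)) * (‖v‖+1) := mul_lt_mul_of_pos_right hp3 hv1
        _ = δ/2 := h5
    nlinarith [norm_nonneg v]
  have hmem2 : p.1 + p.2 • v ∈ ball y δ := by
    rw [mem_ball_iff_norm] at hp1 ⊢
    have he : p.1 + p.2 • v - y = (p.1 - y) + p.2 • v := by abel
    calc ‖p.1 + p.2 • v - y‖ = ‖(p.1 - y) + p.2 • v‖ := by rw [he]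
      _ ≤ ‖p.1 - y‖ + ‖p.2 • v‖ := norm_add_le _ _
      _ < δ := by linarith
  have hmem1 : p.1 ∈ ball y δ := ball_subset_ball (by linarith) hp1
  have hd : dist (f (p.1 + p.2 • v)) (f p.1) ≤ L * dist (p.1 + p.2 • v) p.1 :=
    hL.dist_le_mul _ hmem2 _ hmem1
  rw [Real.dist_eq, dist_eq_norm, add_sub_cancel_left, norm_smul, Real.norm_eq_abs,
    abs_of_pos hp2] at hd
  rw [abs_div, abs_of_pos hp2, div_le_iff₀ hp2]
  calc |f (p.1 + p.2 • v) - f p.1| ≤ L * (|p.2| * ‖v‖) := by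
        rw [abs_of_pos hp2]; exact hd
    _ = L * ‖v‖ * p.2 := by rw [abs_of_pos hp2]; ring

lemma clarke_isBoundedLE {f : H → ℝ} {y : H} (hf : LocallyLipschitzNear f y) (v : H) :
    IsBoundedUnder (· ≤ ·) ((𝓝 y) ×ˢ (𝓝[>] (0 : ℝ)))
      (fun p : H × ℝ => (f (p.1 + p.2 • v) - f p.1) / p.2) := by
  obtain ⟨C, _, hC⟩ := clarke_unif_bound hf
  exact ⟨C * ‖v‖, eventually_map.mpr <| by filter_upwards [hC v] with p hp using (abs_le.1 hp).2⟩

lemma clarke_isBoundedGE {f : H → ℝ} {y : H} (hf : LocallyLipschitzNear f y) (v : H) :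
    IsBoundedUnder (· ≥ ·) ((𝓝 y) ×ˢ (𝓝[>] (0 : ℝ)))
      (fun p : H × ℝ => (f (p.1 + p.2 • v) - f p.1) / p.2) := by
  obtain ⟨C, _, hC⟩ := clarke_unif_bound hf
  exact ⟨-(C * ‖v‖), eventually_map.mpr <| by filter_upwards [hC v] with p hp using (abs_le.1 hp).1⟩

lemma clarke_isCobounded {f : H → ℝ} {y : H} (hf : LocallyLipschitzNear f y) (v : H) :
    IsCoboundedUnder (· ≤ ·) ((𝓝 y) ×ˢ (𝓝[>] (0 : ℝ)))
      (fun p : H × ℝ => (f (p.1 + p.2 • v) - f p.1) / p.2) :=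
  (clarke_isBoundedGE hf v).isCoboundedUnder_le

lemma clarkeDir_zero (f : H → ℝ) (y : H) : clarkeDir f y 0 = 0 := by
  have : (fun p : H × ℝ => (f (p.1 + p.2 • (0:H)) - f p.1) / p.2) = fun _ => (0:ℝ) := by
    funext p; simp
  rw [clarkeDir, this, limsup_const]

end helpers

section helpers2
variable {H : Type*} [NormedAddCommGroup H] [InnerProductSpace ℝ H]

lemma limsup_comp_map {α β : Type*} (u : β → ℝ) (φ : α → β) (l : Filter α) :
    Filter.limsup (u ∘ φ) l = Filter.limsup u (Filter.map φ l) := by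
  show Filter.limsSup (Filter.map (u ∘ φ) l) = Filter.limsSup (Filter.map u (Filter.map φ l))
  rw [Filter.map_map]

lemma map_const_mul_nhdsGT {c : ℝ} (hc : 0 < c) :
    Filter.map (fun s : ℝ => c * s) (𝓝[>] (0:ℝ)) = 𝓝[>] (0:ℝ) := by
  have h := (Homeomorph.mulLeft₀ c hc.ne').isEmbedding.map_nhdsWithin_eq (Ioi (0:ℝ)) 0
  rw [Homeomorph.coe_mulLeft₀] at h
  simp only [Set.image_const_mul_Ioi_zero hc, mul_zero] at h
  exact h

lemma eventually_pos_snd (y : H) :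
    ∀ᶠ p : H × ℝ in (𝓝 y) ×ˢ (𝓝[>] (0:ℝ)), 0 < p.2 := by
  have h2 : ∀ᶠ s : ℝ in 𝓝[>] (0:ℝ), 0 < s :=
    eventually_of_mem self_mem_nhdsWithin fun s hs => hs
  exact ((Eventually.of_forall (fun q : H => True.intro)).prod_mk h2).mono fun p hp => hp.2

lemma clarkeDir_smul_pos {f : H → ℝ} {y : H} (hf : LocallyLipschitzNear f y) {c : ℝ}
    (hc : 0 < c) (v : H) : clarkeDir f y (c • v) = c * clarkeDir f y v := by
  set l := (𝓝 y) ×ˢ (𝓝[>] (0:ℝ)) with hl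
  set Fv := fun p : H × ℝ => (f (p.1 + p.2 • v) - f p.1) / p.2 with hFv
  have hφ : Filter.map (Prod.map (id : H → H) (fun s : ℝ => c * s)) l = l := by
    have h := Filter.prod_map_map_eq (m₁ := (id : H → H)) (m₂ := fun s : ℝ => c * s)
      (f₁ := 𝓝 y) (f₂ := 𝓝[>] (0:ℝ))
    rw [Filter.map_id, map_const_mul_nhdsGT hc] at h
    exact h.symm
  have hcong : clarkeDir f y (c • v)
      = Filter.limsup (((fun r : ℝ => c * r) ∘ Fv) ∘ (Prod.map (id : H → H) (fun s : ℝ => c * s))) l := by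
    refine Filter.limsup_congr ?_
    filter_upwards [eventually_pos_snd y] with p hp
    show (f (p.1 + p.2 • (c • v)) - f p.1) / p.2 = c * ((f (p.1 + (c * p.2) • v) - f p.1) / (c * p.2))
    rw [smul_smul, mul_comm p.2 c, mul_div_assoc' c _ _, mul_div_mul_left _ _ hc.ne']
  rw [hcong, limsup_comp_map, hφ]
  obtain ⟨C, hC0, hC⟩ := clarke_unif_bound hf
  have hbdd : Filter.IsBoundedUnder (· ≤ ·) l fun p => c * Fv p :=
    ⟨c * (C * ‖v‖), Filter.eventually_map.mpr <| by
      filter_upwards [hC v] with p hp using mul_le_mul_of_nonneg_left (abs_le.1 hp).2 hc.le⟩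
  have hcob : Filter.IsCoboundedUnder (· ≤ ·) l fun p => c * Fv p :=
    Filter.IsBoundedUnder.isCoboundedUnder_le
      ⟨-(c * (C * ‖v‖)), Filter.eventually_map.mpr <| by
        filter_upwards [hC v] with p hp
        calc -(c * (C * ‖v‖)) = c * (-(C * ‖v‖)) := by ring
          _ ≤ c * Fv p := mul_le_mul_of_nonneg_left (abs_le.1 hp).1 hc.le⟩
  have key := OrderIso.limsup_apply (f := l) (u := Fv) (OrderIso.mulLeft₀ c hc)
    (clarke_isBoundedLE hf v) (clarke_isCobounded hf v)
    (by exact hbdd) (by exact hcob)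
  exact key.symm

lemma tendsto_shift (y : H) (v : H) :
    Filter.Tendsto (fun p : H × ℝ => (p.1 + p.2 • v, p.2))
      ((𝓝 y) ×ˢ (𝓝[>] (0:ℝ))) ((𝓝 y) ×ˢ (𝓝[>] (0:ℝ))) := by
  refine Filter.Tendsto.prodMk ?_ tendsto_snd
  have h1 : Filter.Tendsto (fun p : H × ℝ => p.1 + p.2 • v) (𝓝 (y, (0:ℝ))) (𝓝 y) := by
    have : Continuous fun p : H × ℝ => p.1 + p.2 • v :=
      continuous_fst.add (continuous_snd.smul continuous_const)
    simpa using this.tendsto (y, (0:ℝ))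
  refine h1.mono_left ?_
  rw [nhds_prod_eq]
  exact Filter.prod_mono le_rfl nhdsWithin_le_nhds

lemma clarkeDir_add_le {f : H → ℝ} {y : H} (hf : LocallyLipschitzNear f y) (u v : H) :
    clarkeDir f y (u + v) ≤ clarkeDir f y u + clarkeDir f y v := by
  set l := (𝓝 y) ×ˢ (𝓝[>] (0:ℝ)) with hl
  set Fu := fun p : H × ℝ => (f (p.1 + p.2 • u) - f p.1) / p.2 with hFu
  set Fv := fun p : H × ℝ => (f (p.1 + p.2 • v) - f p.1) / p.2 with hFv
  set ψ := fun p : H × ℝ => (p.1 + p.2 • v, p.2) with hψ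
  have hψt : Filter.Tendsto ψ l l := tendsto_shift y v
  obtain ⟨C, hC0, hC⟩ := clarke_unif_bound hf
  have hboundu : ∀ᶠ p : H × ℝ in l, |Fu (ψ p)| ≤ C * ‖u‖ := hψt.eventually (hC u)
  have h1 : Filter.IsBoundedUnder (· ≥ ·) l (Fu ∘ ψ) :=
    ⟨-(C * ‖u‖), Filter.eventually_map.mpr <| by
      filter_upwards [hboundu] with p hp using (abs_le.1 hp).1⟩
  have h2 : Filter.IsBoundedUnder (· ≤ ·) l (Fu ∘ ψ) :=
    ⟨C * ‖u‖, Filter.eventually_map.mpr <| by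
      filter_upwards [hboundu] with p hp using (abs_le.1 hp).2⟩
  have hcong : clarkeDir f y (u + v) = Filter.limsup (Fu ∘ ψ + Fv) l := by
    refine Filter.limsup_congr ?_
    filter_upwards [eventually_pos_snd y] with p hp
    show (f (p.1 + p.2 • (u + v)) - f p.1) / p.2
        = (f (p.1 + p.2 • v + p.2 • u) - f (p.1 + p.2 • v)) / p.2
          + (f (p.1 + p.2 • v) - f p.1) / p.2
    rw [← add_div, smul_add]
    have : p.1 + (p.2 • u + p.2 • v) = p.1 + p.2 • v + p.2 • u := by abel
    rw [this]
    ring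
  rw [hcong]
  have step1 : Filter.limsup (Fu ∘ ψ + Fv) l ≤ Filter.limsup (Fu ∘ ψ) l + Filter.limsup Fv l :=
    limsup_add_le h1 h2 (clarke_isCobounded hf v) (clarke_isBoundedLE hf v)
  have step2 : Filter.limsup (Fu ∘ ψ) l ≤ Filter.limsup Fu l := by
    rw [limsup_comp_map]
    refine Filter.limsup_le_limsup_of_le hψt ?_ (clarke_isBoundedLE hf u)
    refine Filter.IsBoundedUnder.isCoboundedUnder_le ?_
    show Filter.IsBounded (· ≥ ·) (Filter.map Fu (Filter.map ψ l))
    rw [Filter.map_map]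
    exact h1
  exact step1.trans (add_le_add step2 le_rfl)

lemma exists_clarke_subgradient [CompleteSpace H] {f : H → ℝ} {y : H}
    (hf : LocallyLipschitzNear f y) {v : H} (hv : v ≠ 0) :
    ∃ w ∈ clarkeSubdiff f y, ⟪w, v⟫ = clarkeDir f y v := by
  obtain ⟨C, hC0, hC⟩ := clarke_unif_bound hf
  set N := fun z : H => clarkeDir f y z with hN
  have hNle : ∀ z, N z ≤ C * ‖z‖ := fun z =>
    limsup_le_of_le (clarke_isCobounded hf z)
      (by filter_upwards [hC z] with p hp using (abs_le.1 hp).2)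
  have N_hom : ∀ c : ℝ, 0 < c → ∀ z, N (c • z) = c * N z := fun c hc z =>
    clarkeDir_smul_pos hf hc z
  have N_add : ∀ z w, N (z + w) ≤ N z + N w := fun z w => clarkeDir_add_le hf z w
  have hNneg : ∀ z, -N z ≤ N (-z) := by
    intro z
    have h0 : N 0 = 0 := clarkeDir_zero f y
    have h1 := N_add z (-z)
    rw [add_neg_cancel, h0] at h1
    linarith
  set d := clarkeDir f y v with hd
  set pf := LinearPMap.mkSpanSingleton (K := ℝ) (L := ℝ) (σ := RingHom.id ℝ) v d hv with hpfdef
  have hpf : ∀ z : pf.domain, pf z ≤ N z := by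
    rintro ⟨z, hz⟩
    obtain ⟨c, rfl⟩ := Submodule.mem_span_singleton.1 hz
    have happ : pf ⟨c • v, hz⟩ = c • d := LinearPMap.mkSpanSingleton'_apply _ _ _ c _
    rw [happ]
    show c • d ≤ N (c • v)
    rcases lt_trichotomy c 0 with h | h | h
    · have he : N (c • v) = (-c) * N (-v) := by
        rw [show c • v = (-c) • (-v) by simp, N_hom (-c) (by linarith) (-v)]
      rw [he, smul_eq_mul]
      nlinarith [hNneg v]
    · subst h
      simp only [zero_smul]
      rw [show N (0 : H) = 0 from clarkeDir_zero f y]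
    · rw [N_hom c h v, smul_eq_mul]
  obtain ⟨g, hg1, hg2⟩ := exists_extension_of_le_sublinear pf N N_hom N_add hpf
  have hgbound : ∀ z, |g z| ≤ C * ‖z‖ := by
    intro z
    rw [abs_le]
    refine ⟨?_, (hg2 z).trans (hNle z)⟩
    have h2 := (hg2 (-z)).trans (hNle (-z))
    rw [map_neg, norm_neg] at h2
    linarith
  set G := g.mkContinuous C (fun z => by rw [Real.norm_eq_abs]; simpa using hgbound z) with hG
  set w := (InnerProductSpace.toDual ℝ H).symm G with hw
  have hwz : ∀ z, ⟪w, z⟫ = g z := fun z => InnerProductSpace.toDual_symm_apply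
  refine ⟨w, fun z => ?_, ?_⟩
  · rw [hwz z]; exact hg2 z
  · rw [hwz v]
    have hmem : v ∈ pf.domain := Submodule.mem_span_singleton_self v
    have h3 := hg1 ⟨v, hmem⟩
    have h4 : pf ⟨v, hmem⟩ = d := LinearPMap.mkSpanSingleton'_apply_self _ _ _ _
    exact h3.trans h4

lemma inner_le_of_min_norm {S : Set H} (hS : Convex ℝ S) {v : H} (hv : -v ∈ S)
    (hmin : ∀ w ∈ S, ‖v‖ ≤ ‖w‖) {w : H} (hw : w ∈ S) : ⟪w, v⟫ ≤ -‖v‖^2 := by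
  have key : ∀ μ : ℝ, 0 < μ → μ ≤ 1 → 2 * (μ * ⟪v, w + v⟫) ≤ μ^2 * ‖w + v‖^2 := by
    intro μ h0 h1
    have hz : (1 - μ) • (-v) + μ • w ∈ S := hS hv hw (by linarith) h0.le (by ring)
    have hnorm := hmin _ hz
    have hid : (1 - μ) • (-v) + μ • w = -v + μ • (w + v) := by
      rw [smul_add]; module
    rw [hid] at hnorm
    have hexp : ‖-v + μ • (w + v)‖^2 = ‖v‖^2 - 2*(μ*⟪v, w+v⟫) + μ^2*‖w+v‖^2 := by
      rw [norm_add_sq_real, inner_neg_left, real_inner_smul_right, norm_neg, norm_smul,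
        Real.norm_eq_abs, abs_of_pos h0, mul_pow]
      ring
    nlinarith [norm_nonneg v, norm_nonneg (-v + μ • (w + v))]
  have hvwv : ⟪v, w + v⟫ ≤ 0 := by
    by_contra hpos
    push_neg at hpos
    have hb : 0 < ‖w + v‖^2 := by
      rcases eq_or_ne (w + v) 0 with h | h
      · rw [h, inner_zero_right] at hpos; linarith
      · have := norm_pos_iff.2 h; positivity
    set μ := min 1 (⟪v, w + v⟫ / ‖w + v‖^2) with hμ
    have hμpos : 0 < μ := lt_min one_pos (div_pos hpos hb)
    have hμ1 : μ ≤ 1 := min_le_left _ _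
    have h2 := key μ hμpos hμ1
    have hμb : μ * ‖w+v‖^2 ≤ ⟪v, w + v⟫ := by
      calc μ * ‖w+v‖^2 ≤ (⟪v, w + v⟫ / ‖w+v‖^2) * ‖w+v‖^2 :=
            mul_le_mul_of_nonneg_right (min_le_right _ _) hb.le
        _ = ⟪v, w + v⟫ := div_mul_cancel₀ _ hb.ne'
    nlinarith
  have hsplit : ⟪v, w⟫ = ⟪v, w + v⟫ - ‖v‖^2 := by
    rw [inner_add_right, real_inner_self_eq_norm_sq]; ring
  rw [real_inner_comm]
  linarith

end helpers2

end clarkeHelpers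

/-- Guaranteed descent along the negative minimal-norm element of `F_ε(x)` up to step size
`ε/‖v̄‖`. -/
theorem stmt11 {H : Type*} [NormedAddCommGroup H] [InnerProductSpace ℝ H] [CompleteSpace H]
    {k : ℕ} (f : Fin k → H → ℝ)
    (hlip : ∀ i, ∀ y : H, LocallyLipschitzNear (f i) y)
    (x : H) (ε : ℝ) (hε : 0 ≤ ε) (vbar : H)
    (hmem : -vbar ∈ multiSubdiff f ε x)
    (hmin : ∀ w ∈ multiSubdiff f ε x, ‖vbar‖ ≤ ‖w‖) :
    ∀ t : ℝ, 0 ≤ t → t * ‖vbar‖ ≤ ε →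
      ∀ i : Fin k, f i (x + t • vbar) ≤ f i x - t * ‖vbar‖ ^ 2 := by
  intro t ht htε i
  rcases eq_or_ne vbar 0 with hv0 | hv0
  · simp [hv0]
  have hconv : Convex ℝ (multiSubdiff f ε x) := (convex_convexHull ℝ _).closure
  have key : ∀ w ∈ multiSubdiff f ε x, ⟪w, vbar⟫ ≤ -‖vbar‖^2 :=
    fun w hw => inner_le_of_min_norm hconv hmem hmin hw
  have hcont : Continuous (f i) := by
    rw [continuous_iff_continuousAt]
    intro z
    obtain ⟨δ, hδ, L, hL⟩ := hlip i z
    exact hL.continuousOn.continuousAt (Metric.ball_mem_nhds z hδ)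
  set c := -‖vbar‖^2 with hc
  set g := fun s : ℝ => f i (x + s • vbar) with hg
  have hdir : ∀ s, 0 ≤ s → s ≤ t → clarkeDir (f i) (x + s • vbar) vbar ≤ c := by
    intro s hs0 hst
    obtain ⟨w, hw, hwv⟩ := exists_clarke_subgradient (hlip i (x + s • vbar)) hv0
    have hyball : x + s • vbar ∈ Metric.closedBall x ε := by
      rw [Metric.mem_closedBall, dist_eq_norm, add_sub_cancel_left, norm_smul,
        Real.norm_eq_abs, abs_of_nonneg hs0]
      calc s * ‖vbar‖ ≤ t * ‖vbar‖ := mul_le_mul_of_nonneg_right hst (norm_nonneg _)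
        _ ≤ ε := htε
    have hw1 : w ∈ goldsteinSubdiff (f i) ε x :=
      subset_closure (subset_convexHull ℝ _ (Set.mem_biUnion hyball hw))
    have hw2 : w ∈ multiSubdiff f ε x :=
      subset_closure (subset_convexHull ℝ _ (Set.mem_iUnion.2 ⟨i, hw1⟩))
    rw [← hwv]
    exact key w hw2
  have hgc : ContinuousOn g (Icc 0 t) :=
    (hcont.comp (continuous_const.add (continuous_id.smul continuous_const))).continuousOn
  have hB : ContinuousOn (fun s : ℝ => f i x + s * c) (Icc 0 t) :=
    (continuous_const.add (continuous_id.mul continuous_const)).continuousOn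
  have hB' : ∀ s ∈ Ico (0:ℝ) t, HasDerivWithinAt (fun z : ℝ => f i x + z * c) c (Ici s) s := by
    intro s _
    simpa using ((hasDerivWithinAt_id s (Ici s)).mul_const c).const_add (f i x)
  have bound : ∀ s ∈ Ico (0:ℝ) t, ∀ r, c < r → ∃ᶠ z in 𝓝[>] s, slope g s z < r := by
    intro s hs r hr
    have h1 : clarkeDir (f i) (x + s • vbar) vbar < r :=
      lt_of_le_of_lt (hdir s hs.1 hs.2.le) hr
    have hbdd := clarke_isBoundedLE (hlip i (x + s • vbar)) vbar
    have h2 : ∀ᶠ p : H × ℝ in (𝓝 (x + s • vbar)) ×ˢ 𝓝[>] (0:ℝ),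
        (f i (p.1 + p.2 • vbar) - f i p.1) / p.2 < r :=
      eventually_lt_of_limsup_lt h1 hbdd
    have h3 : Filter.Tendsto (fun h : ℝ => ((x + s • vbar : H), h)) (𝓝[>] (0:ℝ))
        ((𝓝 (x + s • vbar)) ×ˢ 𝓝[>] (0:ℝ)) :=
      Filter.Tendsto.prodMk tendsto_const_nhds Filter.tendsto_id
    have h4 := h3.eventually h2
    have h5 : Filter.Tendsto (fun z : ℝ => z - s) (𝓝[>] s) (𝓝[>] (0:ℝ)) := by
      refine tendsto_nhdsWithin_iff.2 ⟨?_, ?_⟩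
      · have h6 : Filter.Tendsto (fun z : ℝ => z - s) (𝓝 s) (𝓝 0) := by
          have := ((continuous_id.sub continuous_const).tendsto s :
            Filter.Tendsto (fun z : ℝ => z - s) (𝓝 s) (𝓝 (s - s)))
          convert this using 2 <;> simp
        exact h6.mono_left nhdsWithin_le_nhds
      · filter_upwards [self_mem_nhdsWithin] with z hz using sub_pos.2 (Set.mem_Ioi.1 hz)
    have h6 := h5.eventually h4
    refine (h6.mono ?_).frequently
    intro z hz
    have harg : (x + s • vbar) + (z - s) • vbar = x + z • vbar := by module
    rw [harg] at hz
    rw [slope_def_field]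
    exact hz
  have final := image_le_of_liminf_slope_right_le_deriv_boundary hgc
    (by simp [hg]) hB hB' bound (right_mem_Icc.2 ht)
  have heq : f i x + t * c = f i x - t * ‖vbar‖^2 := by rw [hc]; ring
  rw [heq] at final
  exact final
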